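/- Let f : ℝⁿ → ℝ be μ-strongly convex with minimizer x*, let g = ∇f(x) with ‖g‖_∞ ≤ η and ∇f L-Lipschitz, and let X = x − α Σᵢ sgn(gᵢ)Δᵢ eᶦ with Δᵢ independent Bernoulli, P[Δᵢ=1] = |gᵢ|/η. Then E[‖X − x*‖₂²] ≤ (1 − 2αμ/η)‖x − x*‖₂² + (Lα²√n/η)‖x − x*‖₂. -/

import Mathlib

open scoped RealInnerProductSpace

noncomputable def bernWeight {n : ℕ} (p : Fin n → ℝ) (s : Fin n → Bool) : ℝ :=
  ∏ i, if s i then p i else 1 - p i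

noncomputable def bernExp {n : ℕ} (p : Fin n → ℝ) (h : (Fin n → Bool) → ℝ) : ℝ :=
  ∑ s : Fin n → Bool, bernWeight p s * h s

noncomputable def smgdStep {n : ℕ} (x : EuclideanSpace ℝ (Fin n)) (α : ℝ)
    (g : Fin n → ℝ) (s : Fin n → Bool) : EuclideanSpace ℝ (Fin n) :=
  x - α • ∑ i, (Real.sign (g i) * (if s i then 1 else 0)) • EuclideanSpace.single i (1 : ℝ)

private lemma sum_bernWeight {n : ℕ} (p : Fin n → ℝ) :
    ∑ s : Fin n → Bool, bernWeight p s = 1 := by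
  unfold bernWeight
  rw [← Fintype.prod_sum (fun (i : Fin n) (b : Bool) => if b = true then p i else 1 - p i)]
  have h1 : ∀ i : Fin n, (∑ b : Bool, if b = true then p i else 1 - p i) = 1 := by
    intro i; simp
  simp [h1]

private lemma sum_bernWeight_delta {n : ℕ} (p : Fin n → ℝ) (i : Fin n) :
    ∑ s : Fin n → Bool, bernWeight p s * (if s i then (1:ℝ) else 0) = p i := by
  have key : ∀ s : Fin n → Bool,
      bernWeight p s * (if s i then (1:ℝ) else 0)
        = ∏ j, ((if s j then p j else 1 - p j) * (if j = i then (if s j then (1:ℝ) else 0) else 1)) := by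
    intro s
    rw [Finset.prod_mul_distrib]
    congr 1
    rw [Finset.prod_ite_eq' Finset.univ i (fun j => if s j then (1:ℝ) else 0)]
    simp
  calc ∑ s : Fin n → Bool, bernWeight p s * (if s i then (1:ℝ) else 0)
      = ∑ s : Fin n → Bool, ∏ j, (fun (j : Fin n) (b : Bool) =>
          (if b = true then p j else 1 - p j) * (if j = i then (if b = true then (1:ℝ) else 0) else 1)) j (s j) := by
        simp only [key]
    _ = ∏ j, ∑ b : Bool, ((if b = true then p j else 1 - p j) * (if j = i then (if b = true then (1:ℝ) else 0) else 1)) := by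
        exact (Fintype.prod_sum (fun (j : Fin n) (b : Bool) =>
          (if b = true then p j else 1 - p j) * (if j = i then (if b = true then (1:ℝ) else 0) else 1))).symm
    _ = ∏ j, (if j = i then p j else 1) := by
        refine Finset.prod_congr rfl fun j _ => ?_
        by_cases h : j = i <;> simp [h]
    _ = p i := by
        rw [Finset.prod_ite_eq' Finset.univ i p]; simp

private lemma bernExp_affine {n : ℕ} (p : Fin n → ℝ) (A : ℝ) (b : Fin n → ℝ) :
    bernExp p (fun s => A + ∑ i, b i * (if s i then (1:ℝ) else 0)) = A + ∑ i, b i * p i := by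
  have h2 : ∀ i, ∑ s : Fin n → Bool, bernWeight p s * (b i * (if s i then (1:ℝ) else 0)) = b i * p i := by
    intro i
    rw [← sum_bernWeight_delta p i, Finset.mul_sum]
    exact Finset.sum_congr rfl fun s _ => by ring
  calc bernExp p (fun s => A + ∑ i, b i * (if s i then (1:ℝ) else 0))
      = ∑ s : Fin n → Bool, (bernWeight p s * A
          + ∑ i, bernWeight p s * (b i * (if s i then (1:ℝ) else 0))) := by
        unfold bernExp
        exact Finset.sum_congr rfl fun s _ => by rw [mul_add, Finset.mul_sum]
    _ = (∑ s : Fin n → Bool, bernWeight p s * A)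
          + ∑ i, ∑ s : Fin n → Bool, bernWeight p s * (b i * (if s i then (1:ℝ) else 0)) := by
        rw [Finset.sum_add_distrib, Finset.sum_comm]
    _ = A + ∑ i, b i * p i := by
        rw [← Finset.sum_mul, sum_bernWeight, one_mul]
        exact congrArg _ (Finset.sum_congr rfl fun i _ => h2 i)

private lemma norm_sq_euclid {n : ℕ} (v : EuclideanSpace ℝ (Fin n)) :
    ‖v‖ ^ 2 = ∑ i, v i ^ 2 := by
  rw [EuclideanSpace.norm_eq, Real.sq_sqrt (by positivity)]
  simp [sq_abs]

private lemma smgdStep_coord {n : ℕ} (x : EuclideanSpace ℝ (Fin n)) (α : ℝ) (g : Fin n → ℝ)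
    (s : Fin n → Bool) (xstar : EuclideanSpace ℝ (Fin n)) (i : Fin n) :
    (smgdStep x α g s - xstar) i
      = (x i - xstar i) - α * (Real.sign (g i) * (if s i then 1 else 0)) := by
  have hs : ∀ (F : Fin n → EuclideanSpace ℝ (Fin n)), (∑ j, F j) i = ∑ j, F j i :=
    fun F => by simp
  have hswap : ∀ x : Fin n, (if s x = true then if i = x then (g x).sign else 0 else 0)
      = (if i = x then (if s x = true then (g x).sign else 0) else 0) := by
    intro x; by_cases h1 : s x <;> by_cases h2 : i = x <;> simp [h1, h2]
  simp [smgdStep, hs, EuclideanSpace.single_apply,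
    apply_ite (fun v : EuclideanSpace ℝ (Fin n) => v i), hswap, Finset.sum_ite_eq]
  by_cases h : s i <;> simp [h] <;> ring

theorem stmt_16 (n : ℕ) (f : EuclideanSpace ℝ (Fin n) → ℝ) (μ L α η : ℝ)
    (hμ : 0 < μ) (hL : 0 ≤ L) (hα : 0 < α) (hη : 0 < η)
    (hdiff : Differentiable ℝ f)
    (hconv : ∀ x y : EuclideanSpace ℝ (Fin n),
      ⟪gradient f x - gradient f y, x - y⟫ ≥ μ * ‖x - y‖ ^ 2)
    (hlip : ∀ x y : EuclideanSpace ℝ (Fin n), ‖gradient f x - gradient f y‖ ≤ L * ‖x - y‖)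
    (xstar : EuclideanSpace ℝ (Fin n)) (hmin : ∀ y, f xstar ≤ f y)
    (x : EuclideanSpace ℝ (Fin n)) (g : Fin n → ℝ) (hgdef : g = fun i => gradient f x i)
    (hg : ∀ i, |g i| ≤ η) :
    bernExp (fun i => |g i| / η) (fun s => ‖smgdStep x α g s - xstar‖ ^ 2)
      ≤ (1 - 2 * α * μ / η) * ‖x - xstar‖ ^ 2
        + (L * α ^ 2 * Real.sqrt n / η) * ‖x - xstar‖ := by
  set d : Fin n → ℝ := fun i => x i - xstar i with hd
  have hdi : ∀ i, (x - xstar) i = d i := fun i => rfl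
  -- gradient at the minimizer vanishes
  have hgrad0 : gradient f xstar = 0 := by
    have hmin' : IsLocalMin f xstar := Filter.Eventually.of_forall hmin
    have hfd : fderiv ℝ f xstar = 0 := hmin'.fderiv_eq_zero
    unfold gradient
    rw [hfd, map_zero]
  -- strong convexity bound
  have hIP : μ * ‖x - xstar‖ ^ 2 ≤ ∑ i, g i * d i := by
    have h := hconv x xstar
    rw [hgrad0, sub_zero] at h
    have hinner : ⟪gradient f x, x - xstar⟫ = ∑ i, g i * d i := by
      rw [PiLp.inner_apply]
      exact Finset.sum_congr rfl fun i _ => by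
        rw [hgdef]; simp [RCLike.inner_apply, hd, mul_comm]
    rw [hinner] at h
    exact h
  -- ℓ1–ℓ2 bound
  have hL1 : ∑ i, |g i| ≤ Real.sqrt n * (L * ‖x - xstar‖) := by
    have hnormg : ‖gradient f x‖ = Real.sqrt (∑ i, (g i) ^ 2) := by
      rw [EuclideanSpace.norm_eq]
      congr 1
      exact Finset.sum_congr rfl fun i _ => by rw [hgdef]; simp [sq_abs]
    have hlipx : ‖gradient f x‖ ≤ L * ‖x - xstar‖ := by
      have := hlip x xstar
      rwa [hgrad0, sub_zero] at this
    have hcs : ∑ i, |g i| ≤ Real.sqrt n * Real.sqrt (∑ i, (g i) ^ 2) := by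
      let u : EuclideanSpace ℝ (Fin n) := WithLp.toLp 2 (fun _ => 1)
      let v : EuclideanSpace ℝ (Fin n) := WithLp.toLp 2 (fun i => |g i|)
      have key := real_inner_le_norm u v
      have h1 : ⟪u, v⟫ = ∑ i, |g i| := by
        rw [PiLp.inner_apply]; simp [u, v, RCLike.inner_apply]
      have h2 : ‖u‖ = Real.sqrt n := by
        rw [EuclideanSpace.norm_eq]; simp [u]
      have h3 : ‖v‖ = Real.sqrt (∑ i, (g i) ^ 2) := by
        rw [EuclideanSpace.norm_eq]; congr 1
        exact Finset.sum_congr rfl fun i _ => by simp [v, sq_abs]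
      rw [h1, h2, h3] at key
      exact key
    calc ∑ i, |g i| ≤ Real.sqrt n * Real.sqrt (∑ i, (g i) ^ 2) := hcs
      _ = Real.sqrt n * ‖gradient f x‖ := by rw [hnormg]
      _ ≤ Real.sqrt n * (L * ‖x - xstar‖) :=
          mul_le_mul_of_nonneg_left hlipx (Real.sqrt_nonneg _)
  -- exact expectation computation
  have hexp : bernExp (fun i => |g i| / η) (fun s => ‖smgdStep x α g s - xstar‖ ^ 2)
      = ‖x - xstar‖ ^ 2
        + ∑ i, (α ^ 2 * Real.sign (g i) ^ 2 - 2 * α * Real.sign (g i) * d i) * (|g i| / η) := by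
    have hfun : (fun s => ‖smgdStep x α g s - xstar‖ ^ 2)
        = fun s : Fin n → Bool => (∑ i, d i ^ 2)
            + ∑ i, (α ^ 2 * Real.sign (g i) ^ 2 - 2 * α * Real.sign (g i) * d i)
                * (if s i then (1:ℝ) else 0) := by
      funext s
      rw [norm_sq_euclid, ← Finset.sum_add_distrib]
      refine Finset.sum_congr rfl fun i _ => ?_
      rw [smgdStep_coord]
      by_cases h : s i <;> simp [h] <;> ring
    rw [hfun, bernExp_affine, norm_sq_euclid]
    rfl
  rw [hexp]
  have hsum : ∑ i, (α ^ 2 * Real.sign (g i) ^ 2 - 2 * α * Real.sign (g i) * d i) * (|g i| / η)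
      = (α ^ 2 / η) * (∑ i, |g i|) - (2 * α / η) * (∑ i, g i * d i) := by
    rw [Finset.mul_sum, Finset.mul_sum, ← Finset.sum_sub_distrib]
    refine Finset.sum_congr rfl fun i _ => ?_
    have h1 : Real.sign (g i) * |g i| = g i := by
      rcases lt_trichotomy (g i) 0 with h | h | h
      · rw [Real.sign_of_neg h, abs_of_neg h]; ring
      · simp [h]
      · rw [Real.sign_of_pos h, abs_of_pos h]; ring
    have h2 : Real.sign (g i) ^ 2 * |g i| = |g i| := by
      rcases lt_trichotomy (g i) 0 with h | h | h
      · rw [Real.sign_of_neg h]; ring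
      · simp [h]
      · rw [Real.sign_of_pos h]; ring
    have e : (α ^ 2 * Real.sign (g i) ^ 2 - 2 * α * Real.sign (g i) * d i) * (|g i| / η)
        = α ^ 2 / η * (Real.sign (g i) ^ 2 * |g i|)
          - 2 * α / η * ((Real.sign (g i) * |g i|) * d i) := by ring
    rw [e, h1, h2]
  rw [hsum]
  have e1 : (2 * α / η) * (μ * ‖x - xstar‖ ^ 2) ≤ (2 * α / η) * (∑ i, g i * d i) :=
    mul_le_mul_of_nonneg_left hIP (by positivity)
  have e2 : (α ^ 2 / η) * (∑ i, |g i|) ≤ (α ^ 2 / η) * (Real.sqrt n * (L * ‖x - xstar‖)) :=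
    mul_le_mul_of_nonneg_left hL1 (by positivity)
  have hr : (1 - 2 * α * μ / η) * ‖x - xstar‖ ^ 2 + (L * α ^ 2 * Real.sqrt n / η) * ‖x - xstar‖
      = ‖x - xstar‖ ^ 2 - (2 * α / η) * (μ * ‖x - xstar‖ ^ 2)
        + (α ^ 2 / η) * (Real.sqrt n * (L * ‖x - xstar‖)) := by ring
  linarith [e1, e2]
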